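/- For all integers m and all positive integers n, L_m * (sum over k from 1 to n of (-1)^{k(m-1)} L_{2mk}) = (-1)^{n(m-1)} L_{2mn+m} - L_m. -/

import Mathlib

/-- Fibonacci numbers extended to all integers via `F_{-n} = (-1)^{n-1} F_n`. -/
def fibZ (n : ℤ) : ℤ :=
  if 0 ≤ n then (Nat.fib n.toNat : ℤ) else (-1) ^ ((-n).toNat + 1) * (Nat.fib (-n).toNat : ℤ)

/-- Lucas numbers extended to all integers, `L_n = F_{n-1} + F_{n+1}`. -/
def lucasZ (n : ℤ) : ℤ := fibZ (n - 1) + fibZ (n + 1)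



lemma fibZ_natCast (k : ℕ) : fibZ (k : ℤ) = Nat.fib k := by
  simp [fibZ]

lemma fibZ_neg_natCast (k : ℕ) : fibZ (-(k : ℤ)) = (-1) ^ (k + 1) * Nat.fib k := by
  rcases Nat.eq_zero_or_pos k with rfl | hk
  · simp [fibZ]
  · rw [fibZ, if_neg (by omega)]
    simp

lemma fibZ_add_two (n : ℤ) : fibZ (n + 2) = fibZ (n + 1) + fibZ n := by
  rcases le_or_gt 0 n with h | h
  · obtain ⟨k, rfl⟩ := Int.eq_ofNat_of_zero_le h
    have h1 : (k : ℤ) + 2 = ((k + 2 : ℕ) : ℤ) := by push_cast; ring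
    have h2 : (k : ℤ) + 1 = ((k + 1 : ℕ) : ℤ) := by push_cast; ring
    rw [h1, h2, fibZ_natCast, fibZ_natCast, fibZ_natCast, Nat.fib_add_two]
    push_cast; ring
  · obtain ⟨k, rfl⟩ : ∃ k : ℕ, n = -(k : ℤ) := ⟨(-n).toNat, by omega⟩
    match k with
    | 0 => simp at h
    | 1 => show fibZ 1 = fibZ 0 + fibZ (-1); decide
    | 2 => show fibZ 0 = fibZ (-1) + fibZ (-2); decide
    | (k+3) =>
      have h1 : -((k+3 : ℕ) : ℤ) + 2 = -((k+1 : ℕ) : ℤ) := by push_cast; ring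
      have h2 : -((k+3 : ℕ) : ℤ) + 1 = -((k+2 : ℕ) : ℤ) := by push_cast; ring
      rw [h1, h2, fibZ_neg_natCast, fibZ_neg_natCast, fibZ_neg_natCast, Nat.fib_add_two (n := k+1), Nat.fib_add_two (n := k)]
      push_cast
      ring_nf

lemma lucasZ_add_two (n : ℤ) : lucasZ (n + 2) = lucasZ (n + 1) + lucasZ n := by
  unfold lucasZ
  have h1 := fibZ_add_two (n - 1)
  have h2 := fibZ_add_two (n + 1)
  have e1 : n + 2 - 1 = (n - 1) + 2 := by ring
  have e2 : n + 2 + 1 = (n + 1) + 2 := by ring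
  have e3 : n + 1 - 1 = (n - 1) + 1 := by ring
  have e4 : n + 1 + 1 = (n + 1) + 1 := by ring
  rw [e1, e2, e3, h1, h2]
  ring

lemma fibZ_neg (z : ℤ) : fibZ (-z) = (((-1 : ℤˣ) ^ (z + 1) : ℤˣ) : ℤ) * fibZ z := by
  rcases le_or_gt 0 z with h | h
  · obtain ⟨k, rfl⟩ := Int.eq_ofNat_of_zero_le h
    have h2 : (((-1:ℤˣ)^((k:ℤ)+1) : ℤˣ) : ℤ) = (-1:ℤ)^(k+1) := by
      rw [show ((k:ℤ)+1) = ((k+1:ℕ):ℤ) by push_cast; ring, zpow_natCast]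
      simp
    rw [fibZ_neg_natCast, fibZ_natCast, h2]
  · obtain ⟨k, rfl⟩ : ∃ k : ℕ, z = -(k : ℤ) := ⟨(-z).toNat, by omega⟩
    rw [neg_neg, fibZ_natCast, fibZ_neg_natCast]
    have key : ((-1:ℤˣ)^(-(k:ℤ)+1) : ℤˣ) * ((-1:ℤˣ)^((k:ℤ)+1)) = 1 := by
      rw [← zpow_add, show -(k:ℤ)+1+((k:ℤ)+1) = 2*1 by ring, zpow_mul, zpow_one]
      decide
    have h2 : (((-1:ℤˣ)^((k:ℤ)+1) : ℤˣ) : ℤ) = (-1:ℤ)^(k+1) := by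
      rw [show ((k:ℤ)+1) = ((k+1:ℕ):ℤ) by push_cast; ring, zpow_natCast]
      simp
    have h1 : (((-1:ℤˣ)^(-(k:ℤ)+1) : ℤˣ) : ℤ) * ((-1:ℤ))^(k+1) = 1 := by
      rw [← h2, ← Units.val_mul, key, Units.val_one]
    linear_combination (-(Nat.fib k : ℤ)) * h1

lemma neg_one_zpow_coe_mul (a b : ℤ) :
    (((-1:ℤˣ)^a : ℤˣ) : ℤ) * (((-1:ℤˣ)^b : ℤˣ) : ℤ) = (((-1:ℤˣ)^(a+b) : ℤˣ) : ℤ) := by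
  rw [← Units.val_mul, ← zpow_add]

lemma neg_one_zpow_sq (z : ℤ) : ((-1:ℤˣ)^(2*z) : ℤˣ) = 1 := by
  have h : ((-1:ℤˣ))^(2:ℤ) = 1 := by decide
  rw [zpow_mul, h, one_zpow]

lemma neg_one_zpow_two_mul_sub_one (z : ℤ) : (((-1:ℤˣ)^(2*z - 1) : ℤˣ) : ℤ) = -1 := by
  rw [show 2*z-1 = 2*z + (-1) by ring, zpow_add, neg_one_zpow_sq, one_mul]
  decide

lemma lucasZ_neg (z : ℤ) : lucasZ (-z) = (((-1:ℤˣ)^z : ℤˣ) : ℤ) * lucasZ z := by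
  unfold lucasZ
  rw [show -z - 1 = -(z+1) by ring, show -z+1 = -(z-1) by ring, fibZ_neg, fibZ_neg]
  have e1 : ((-1:ℤˣ)^(z+1+1) : ℤˣ) = (-1:ℤˣ)^z := by
    rw [show z+1+1 = z+2*1 by ring, zpow_add, neg_one_zpow_sq, mul_one]
  have e2 : ((-1:ℤˣ)^(z-1+1) : ℤˣ) = (-1:ℤˣ)^z := by
    rw [show z-1+1 = z by ring]
  rw [e1, e2]
  ring

lemma lucasZ_mul (m b : ℤ) : lucasZ m * lucasZ b
    = lucasZ (m+b) + (((-1:ℤˣ)^m : ℤˣ) : ℤ) * lucasZ (b-m) := by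
  set c : ℤ := (((-1:ℤˣ)^m : ℤˣ) : ℤ) with hc
  have step_up : ∀ b:ℤ,
      lucasZ m * lucasZ b = lucasZ (m+b) + c * lucasZ (b-m) →
      lucasZ m * lucasZ (b+1) = lucasZ (m+(b+1)) + c * lucasZ (b+1-m) →
      lucasZ m * lucasZ (b+2) = lucasZ (m+(b+2)) + c * lucasZ (b+2-m) := by
    intro b h0 h1
    have r1 := lucasZ_add_two b
    have r2 := lucasZ_add_two (m+b)
    have r3 := lucasZ_add_two (b-m)
    rw [show m+(b+2) = (m+b)+2 by ring, show b+2-m = (b-m)+2 by ring, r1, r2, r3,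
      show m+b+1 = m+(b+1) by ring, show b-m+1 = b+1-m by ring]
    linear_combination h0 + h1
  have step_down : ∀ b:ℤ,
      lucasZ m * lucasZ (b+1) = lucasZ (m+(b+1)) + c * lucasZ (b+1-m) →
      lucasZ m * lucasZ (b+2) = lucasZ (m+(b+2)) + c * lucasZ (b+2-m) →
      lucasZ m * lucasZ b = lucasZ (m+b) + c * lucasZ (b-m) := by
    intro b h1 h2
    have r1 := lucasZ_add_two b
    have r2 := lucasZ_add_two (m+b)
    have r3 := lucasZ_add_two (b-m)
    rw [show m+(b+2) = (m+b)+2 by ring, show b+2-m = (b-m)+2 by ring, r1, r2, r3] at h2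
    rw [show m+(b+1) = m+b+1 by ring, show b+1-m = b-m+1 by ring] at h1
    linear_combination h2 - h1
  have base0 : lucasZ m * lucasZ 0 = lucasZ (m+0) + c * lucasZ (0-m) := by
    have h0 : lucasZ 0 = 2 := by decide
    have hneg : lucasZ (0-m) = c * lucasZ m := by
      rw [show (0:ℤ)-m = -m by ring, lucasZ_neg]
    have hcc : c * c = 1 := by
      rw [hc, neg_one_zpow_coe_mul, show m+m = 2*m by ring, neg_one_zpow_sq, Units.val_one]
    rw [h0, hneg, add_zero]
    linear_combination -(lucasZ m) * hcc
  have base1 : lucasZ m * lucasZ (0+1) = lucasZ (m+(0+1)) + c * lucasZ (0+1-m) := by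
    have h1 : lucasZ (0+1) = 1 := by decide
    have hneg : lucasZ (0+1-m) = (((-1:ℤˣ)^(m-1) : ℤˣ) : ℤ) * lucasZ (m-1) := by
      rw [show (0:ℤ)+1-m = -(m-1) by ring, lucasZ_neg]
    have hcc : c * (((-1:ℤˣ)^(m-1) : ℤˣ) : ℤ) = -1 := by
      rw [hc, neg_one_zpow_coe_mul, show m+(m-1) = 2*m-1 by ring,
        neg_one_zpow_two_mul_sub_one]
    have hrec := lucasZ_add_two (m-1)
    rw [show m-1+2 = m+(0+1) by ring, show m-1+1 = m by ring] at hrec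
    rw [h1, hneg, hrec]
    linear_combination -(lucasZ (m-1)) * hcc
  suffices h : ∀ b:ℤ, (lucasZ m * lucasZ b = lucasZ (m+b) + c * lucasZ (b-m)) ∧
      (lucasZ m * lucasZ (b+1) = lucasZ (m+(b+1)) + c * lucasZ (b+1-m)) from (h b).1
  intro b
  induction b using Int.induction_on with
  | zero => exact ⟨base0, base1⟩
  | succ i ih =>
    refine ⟨ih.2, ?_⟩
    have := step_up i ih.1 ih.2
    rw [show (i:ℤ)+2 = (i:ℤ)+1+1 by ring] at this
    exact this
  | pred i ih =>
    have h1 : lucasZ m * lucasZ (-(i:ℤ)-1+1) = lucasZ (m+(-(i:ℤ)-1+1)) + c * lucasZ (-(i:ℤ)-1+1-m) := by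
      rw [show -(i:ℤ)-1+1 = -(i:ℤ) by ring]
      exact ih.1
    have h2 : lucasZ m * lucasZ (-(i:ℤ)-1+2) = lucasZ (m+(-(i:ℤ)-1+2)) + c * lucasZ (-(i:ℤ)-1+2-m) := by
      rw [show -(i:ℤ)-1+2 = -(i:ℤ)+1 by ring]
      exact ih.2
    exact ⟨step_down _ h1 h2, h1.trans (by rw [show -(i:ℤ)-1+1 = -(i:ℤ) by ring])⟩

theorem stmt8 (m : ℤ) (n : ℕ) (hn : 0 < n) :
    lucasZ m * ∑ k ∈ Finset.Icc 1 n,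
        (((-1 : ℤˣ) ^ ((k : ℤ) * (m - 1)) : ℤˣ) : ℤ) * lucasZ (2 * m * k)
      = (((-1 : ℤˣ) ^ ((n : ℤ) * (m - 1)) : ℤˣ) : ℤ) * lucasZ (2 * m * n + m) - lucasZ m := by
  induction n, hn using Nat.le_induction with
  | base =>
    rw [Finset.Icc_self, Finset.sum_singleton, Nat.cast_one]
    have key := lucasZ_mul m (2*m*1)
    rw [show m+2*m*1 = 2*m*1+m by ring, show 2*m*1-m = m by ring] at key
    have s2 : (((-1:ℤˣ)^((1:ℤ)*(m-1)) : ℤˣ) : ℤ) * (((-1:ℤˣ)^m : ℤˣ) : ℤ) = -1 := by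
      rw [neg_one_zpow_coe_mul, show (1:ℤ)*(m-1)+m = 2*m-1 by ring,
        neg_one_zpow_two_mul_sub_one]
    linear_combination (((-1:ℤˣ)^((1:ℤ)*(m-1)) : ℤˣ) : ℤ) * key + lucasZ m * s2
  | succ n hn ih =>
    rw [Finset.sum_Icc_succ_top (by omega : 1 ≤ n+1), Nat.cast_add, Nat.cast_one]
    have key := lucasZ_mul m (2*m*((n:ℤ)+1))
    rw [show m+2*m*((n:ℤ)+1) = 2*m*((n:ℤ)+1)+m by ring,
      show 2*m*((n:ℤ)+1)-m = 2*m*(n:ℤ)+m by ring] at key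
    have s3 : (((-1:ℤˣ)^(((n:ℤ)+1)*(m-1)) : ℤˣ) : ℤ) * (((-1:ℤˣ)^m : ℤˣ) : ℤ)
        = -((((-1:ℤˣ)^((n:ℤ)*(m-1)) : ℤˣ) : ℤ)) := by
      rw [neg_one_zpow_coe_mul, show ((n:ℤ)+1)*(m-1)+m = (n:ℤ)*(m-1) + (2*m-1) by ring,
        ← neg_one_zpow_coe_mul, neg_one_zpow_two_mul_sub_one]
      ring
    linear_combination ih + (((-1:ℤˣ)^(((n:ℤ)+1)*(m-1)) : ℤˣ) : ℤ) * key
      + lucasZ (2*m*(n:ℤ)+m) * s3
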